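/- Given the MIP relaxation where burning indicators satisfy y_v ≥ 1 − a_v/H with y_v ∈ {0,1} and arrival times a_v ≤ d^r(s,v): in any optimal solution minimizing Σ_v y_v, y_v = 1 if and only if d^r(s,v) < H. Hence the MIP optimal objective with fixed protection vector r equals |{v : d^r(s,v) < H}|, the true number of burned vertices. -/

import Mathlib

open scoped ENNReal

/-- `l` is a directed path from `u` to `v` along arc relation `A`. -/
def IsPathFrom {V : Type*} (A : V → V → Prop) (u v : V) (l : List V) : Prop :=
  l.head? = some u ∧ l.getLast? = some v ∧ l.Chain' A

/-- Total cost of a path: sum of arc costs over consecutive pairs. -/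
def pathCost {V : Type*} (c : V → V → ℝ) (l : List V) : ℝ :=
  ((l.zip l.tail).map fun p => c p.1 p.2).sum

/-- Shortest-path distance from `u` to `v` (infimum of path costs, `⊤` if unreachable). -/
noncomputable def gdist {V : Type*} (A : V → V → Prop) (c : V → V → ℝ) (u v : V) : ℝ≥0∞ :=
  ⨅ l : {l : List V // IsPathFrom A u v l}, ENNReal.ofReal (pathCost c l)

open Classical in
/-- Arc costs after protecting the vertices of `P`: every outgoing arc of a
protected vertex is delayed by `Δ`. -/
noncomputable def delCost {V : Type*} (c : V → V → ℝ) (P : Set V) (Δ : ℝ) : V → V → ℝ :=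
  fun u v => c u v + (if u ∈ P then Δ else 0)

/- auxiliary lemmas -/

lemma pathCost_cons_cons {V : Type*} (c : V → V → ℝ) (x y : V) (l : List V) :
    pathCost c (x :: y :: l) = c x y + pathCost c (y :: l) := by
  simp [pathCost]

/-- along a chain, arrival times satisfy `a last ≤ a head + cost`. -/
lemma chain_bound {V : Type*} {A : V → V → Prop} {c : V → V → ℝ} {a : V → ℝ}
    (hprop : ∀ u v, A u v → a v ≤ a u + c u v) :
    ∀ (l : List V) (u v : V), l.head? = some u → l.getLast? = some v → l.Chain' A →
      a v ≤ a u + pathCost c l := by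
  intro l
  induction l with
  | nil => intro u v h; simp at h
  | cons x l ih =>
    intro u v hh hl hc
    simp at hh; subst hh
    match l with
    | [] =>
      simp [List.getLast?] at hl; subst hl
      simp [pathCost]
    | y :: l' =>
      replace hc := List.isChain_cons_cons.mp hc
      have h1 := ih y v rfl (by simpa using hl) hc.2
      have h2 := hprop x y hc.1
      rw [pathCost_cons_cons]
      linarith

lemma pathCost_append_singleton {V : Type*} (c : V → V → ℝ) :
    ∀ (l : List V) (u v : V), l.getLast? = some u →
      pathCost c (l ++ [v]) = pathCost c l + c u v := by
  intro l
  induction l with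
  | nil => intro u v h; simp at h
  | cons x l ih =>
    intro u v hl
    match l with
    | [] =>
      simp [List.getLast?] at hl; subst hl
      simp [pathCost]
    | y :: l' =>
      have h1 := ih u v (by simpa using hl)
      simp only [List.cons_append] at *
      rw [pathCost_cons_cons, pathCost_cons_cons, h1]
      ring

lemma gdist_self_le_zero {V : Type*} (A : V → V → Prop) (c : V → V → ℝ) (s : V) :
    gdist A c s s = 0 := by
  have h : IsPathFrom A s s [s] := ⟨rfl, rfl, List.isChain_singleton s⟩
  refine le_antisymm ?_ zero_le
  have := iInf_le (fun l : {l : List V // IsPathFrom A s s l} =>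
    ENNReal.ofReal (pathCost c l)) ⟨[s], h⟩
  simpa [gdist, pathCost] using this

lemma gdist_triangle {V : Type*} (A : V → V → Prop) (c : V → V → ℝ) (s u v : V)
    (huv : A u v) :
    gdist A c s v ≤ gdist A c s u + ENNReal.ofReal (c u v) := by
  by_cases hne : Nonempty {l : List V // IsPathFrom A s u l}
  · simp only [gdist]
    rw [ENNReal.iInf_add]
    refine le_iInf ?_
    rintro ⟨l, hl⟩
    have hlne : l ≠ [] := by rintro rfl; simp [IsPathFrom] at hl
    have hpath : IsPathFrom A s v (l ++ [v]) := by
      refine ⟨?_, ?_, ?_⟩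
      · rw [List.head?_append_of_ne_nil _ hlne]; exact hl.1
      · simp
      · refine List.isChain_append.mpr ?_
        refine ⟨hl.2.2, by simp, ?_⟩
        intro x hx y hy
        simp at hy; subst hy
        rw [hl.2.1] at hx; simp at hx; subst hx; exact huv
    refine le_trans (iInf_le (fun l : {l : List V // IsPathFrom A s v l} =>
      ENNReal.ofReal (pathCost c l)) ⟨l ++ [v], hpath⟩) ?_
    rw [pathCost_append_singleton c l u v hl.2.1]
    exact ENNReal.ofReal_add_le
  · have htop : gdist A c s u = ⊤ := by
      have : IsEmpty {l : List V // IsPathFrom A s u l} := not_nonempty_iff.mp hne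
      simp [gdist]
    simp [htop]

/-- In any feasible solution, if `gdist < H` then `y v = true`. -/
lemma feasible_burn {V : Type*} {A : V → V → Prop}
    {s : V} {H : ℝ} (hH : 0 < H) {c : V → V → ℝ}
    {a : V → ℝ} {y : V → Bool} (has : a s = 0)
    (hprop : ∀ u v, A u v → a v ≤ a u + c u v)
    (hy : ∀ v, (1 : ℝ) - a v / H ≤ (if y v then 1 else 0))
    (v : V) (hlt : gdist A c s v < ENNReal.ofReal H) : y v = true := by
  rw [gdist, iInf_lt_iff] at hlt
  obtain ⟨⟨l, hl⟩, hcost⟩ := hlt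
  have hc : pathCost c l < H := by
    simp only at hcost
    exact (ENNReal.ofReal_lt_ofReal_iff hH).mp hcost
  have hav : a v ≤ pathCost c l := by
    have := chain_bound hprop l s v hl.1 hl.2.1 hl.2.2
    linarith [this]
  have h1 : a v < H := lt_of_le_of_lt hav hc
  have h2 : (0:ℝ) < 1 - a v / H := by
    have := (div_lt_one hH).mpr h1
    linarith
  by_contra hfalse
  simp only [Bool.not_eq_true] at hfalse
  have := hy v
  rw [hfalse] at this
  simp at this
  linarith

/-- in any optimal solution of the MIP with fixed protection vector
`r` (minimizing `Σ_v y_v` subject to `a_s = 0`, `a_v ≤ a_u + t_{uv} + Δ·r_u`,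
`y_v ∈ {0,1}`, `y_v ≥ 1 − a_v/H`), we have `y_v = 1` iff `d^r(s,v) < H`; hence
the optimal objective equals the true number of burned vertices. -/
theorem mip_optimal_burned_correct {V : Type*} [Fintype V] (A : V → V → Prop)
    (t : V → V → ℝ) (hpos : ∀ u v, A u v → 0 < t u v)
    (s : V) (Δ H : ℝ) (hΔ : 0 ≤ Δ) (hH : 0 < H) (r : V → Bool)
    (a : V → ℝ) (y : V → Bool)
    (ha0 : ∀ v, 0 ≤ a v) (has : a s = 0)
    (hprop : ∀ u v, A u v → a v ≤ a u + (t u v + (if r u then Δ else 0)))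
    (hy : ∀ v, (1 : ℝ) - a v / H ≤ (if y v then 1 else 0))
    (hopt : ∀ (a' : V → ℝ) (y' : V → Bool), (∀ v, 0 ≤ a' v) → a' s = 0 →
      (∀ u v, A u v → a' v ≤ a' u + (t u v + (if r u then Δ else 0))) →
      (∀ v, (1 : ℝ) - a' v / H ≤ (if y' v then 1 else 0)) →
      (∑ v : V, (if y v then (1 : ℝ) else 0)) ≤
        ∑ v : V, (if y' v then (1 : ℝ) else 0)) :
    (∀ v : V, y v = true ↔
      gdist A (fun u w => t u w + (if r u then Δ else 0)) s v < ENNReal.ofReal H) ∧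
    (∑ v : V, (if y v then (1 : ℝ) else 0)) =
      (Set.ncard {v : V |
        gdist A (fun u w => t u w + (if r u then Δ else 0)) s v < ENNReal.ofReal H} : ℝ) := by
  classical
  set c : V → V → ℝ := fun u w => t u w + (if r u then Δ else 0) with hc
  have hcnn : ∀ u v, A u v → 0 ≤ c u v := fun u v h => by
    have := hpos u v h
    simp only [hc]
    split <;> linarith
  set g : V → ℝ≥0∞ := fun v => gdist A c s v with hg
  -- the candidate optimal solution
  set a' : V → ℝ := fun v => (min (g v) (ENNReal.ofReal H)).toReal with ha'
  set y' : V → Bool := fun v => decide (g v < ENNReal.ofReal H) with hy'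
  have hfin : ∀ v, min (g v) (ENNReal.ofReal H) ≠ ⊤ :=
    fun v => ne_top_of_le_ne_top ENNReal.ofReal_ne_top (min_le_right _ _)
  have ha'0 : ∀ v, 0 ≤ a' v := fun v => ENNReal.toReal_nonneg
  have ha's : a' s = 0 := by
    simp only [ha', hg, gdist_self_le_zero A c s]
    simp
  have ha'prop : ∀ u v, A u v → a' v ≤ a' u + c u v := by
    intro u v huv
    have htri : g v ≤ g u + ENNReal.ofReal (c u v) := gdist_triangle A c s u v huv
    have key : min (g v) (ENNReal.ofReal H) ≤
        min (g u) (ENNReal.ofReal H) + ENNReal.ofReal (c u v) := by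
      rcases le_total (g u) (ENNReal.ofReal H) with h | h
      · rw [min_eq_left h]
        exact le_trans (min_le_left _ _) htri
      · rw [min_eq_right h]
        exact le_trans (min_le_right _ _) le_self_add
    calc a' v ≤ (min (g u) (ENNReal.ofReal H) + ENNReal.ofReal (c u v)).toReal :=
          ENNReal.toReal_mono (by
            exact ENNReal.add_ne_top.mpr ⟨hfin u, ENNReal.ofReal_ne_top⟩) key
      _ = a' u + c u v := by
          rw [ENNReal.toReal_add (hfin u) ENNReal.ofReal_ne_top,
            ENNReal.toReal_ofReal (hcnn u v huv)]
  have hy'feas : ∀ v, (1 : ℝ) - a' v / H ≤ (if y' v then 1 else 0) := by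
    intro v
    by_cases h : g v < ENNReal.ofReal H
    · have hv : (if y' v then (1:ℝ) else 0) = 1 := by simp [hy', h]
      rw [hv]
      have : 0 ≤ a' v / H := div_nonneg (ha'0 v) hH.le
      linarith
    · have hv : (if y' v then (1:ℝ) else 0) = 0 := by simp [hy', h]
      rw [hv]
      push_neg at h
      have : a' v = H := by
        simp only [ha', min_eq_right h, ENNReal.toReal_ofReal hH.le]
      rw [this, div_self hH.ne']
      linarith
  -- y' is true → y is true
  have hy'y : ∀ v, y' v = true → y v = true := by
    intro v hv
    simp only [hy', decide_eq_true_eq] at hv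
    exact feasible_burn hH has hprop hy v hv
  -- sums
  have hsum_le : (∑ v : V, (if y' v then (1:ℝ) else 0)) ≤ ∑ v : V, (if y v then (1:ℝ) else 0) := by
    apply Finset.sum_le_sum
    intro v _
    by_cases h : y' v = true
    · rw [if_pos h, if_pos (hy'y v h)]
    · rw [if_neg h]
      split <;> norm_num
  have hsum_ge := hopt a' y' ha'0 ha's ha'prop hy'feas
  have hsum_eq : (∑ v : V, (if y v then (1:ℝ) else 0)) = ∑ v : V, (if y' v then (1:ℝ) else 0) :=
    le_antisymm hsum_ge hsum_le
  have hpt : ∀ v : V, (if y' v then (1:ℝ) else 0) = (if y v then (1:ℝ) else 0) := by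
    have := (Finset.sum_eq_sum_iff_of_le (s := Finset.univ)
      (f := fun v => if y' v then (1:ℝ) else 0) (g := fun v => if y v then (1:ℝ) else 0)
      (fun v _ => by
        by_cases h : y' v = true
        · rw [if_pos h, if_pos (hy'y v h)]
        · rw [if_neg h]
          split <;> norm_num)).mp hsum_eq.symm
    exact fun v => this v (Finset.mem_univ v)
  have hyy' : ∀ v, y v = y' v := by
    intro v
    have := hpt v
    by_cases h1 : y v <;> by_cases h2 : y' v <;>
      simp [h1, h2] at this ⊢
  have hiff : ∀ v : V, y v = true ↔ g v < ENNReal.ofReal H := by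
    intro v
    rw [hyy' v]
    simp [hy']
  refine ⟨hiff, ?_⟩
  have hset : {v : V | g v < ENNReal.ofReal H} = {v : V | y v = true} := by
    ext v; exact (hiff v).symm
  rw [hset, Set.ncard_eq_toFinset_card']
  have : (∑ v : V, (if y v then (1:ℝ) else 0)) =
      ((Finset.univ.filter fun v => y v = true).card : ℝ) := by
    rw [Finset.sum_boole]
  rw [this]
  congr 1
  simp [Set.toFinset_setOf]
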